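/- For every θ ∈ (0,π) and every real z with |z| < 1, the series ∑_{n=0}^∞ P_n(cos θ) z^n converges and its sum equals (1 − 2z cos θ + z²)^{−1/2} · exp( cot θ · arctan( z sin θ / (1 − z cos θ) ) ). -/

import Mathlib

open MeasureTheory Filter Topology

/-- Pollaczek polynomials with parameters a = 1, b = 0. -/
noncomputable def pol : ℕ → ℝ → ℝ
  | 0, _ => 1
  | 1, x => 2 * x
  | (n+2), x => (2 * ((n:ℝ) + 2) * x * pol (n+1) x - ((n:ℝ) + 1) * pol n x) / ((n:ℝ) + 2)

/-- Rescaled polynomials `Q_n(x) = ρ^{-n/2} P_n((1+ρ)x/(2√ρ))`. -/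
noncomputable def Q (ρ : ℝ) (n : ℕ) (x : ℝ) : ℝ :=
  pol n ((1 + ρ) * x / (2 * Real.sqrt ρ)) / (Real.sqrt ρ) ^ n

/-- `x_ρ(θ) = (2√ρ/(1+ρ)) cos θ`. -/
noncomputable def X (ρ θ : ℝ) : ℝ := (2 * Real.sqrt ρ / (1 + ρ)) * Real.cos θ

/-- Density of the spectral measure in the variable θ. -/
noncomputable def W (θ : ℝ) : ℝ :=
  (Real.sin θ / Real.cosh (Real.pi * (Real.cos θ / Real.sin θ) / 2)) *
    Real.exp ((θ - Real.pi / 2) * (Real.cos θ / Real.sin θ))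

/-- `G_ρ(θ) = 𝒫(θ, √ρ) = ∑ ρ^m Q_m(x_ρ(θ))`. -/
noncomputable def G (ρ θ : ℝ) : ℝ :=
  (1 - 2 * Real.sqrt ρ * Real.cos θ + ρ) ^ (-(1:ℝ)/2) *
    Real.exp ((Real.cos θ / Real.sin θ) *
      Real.arctan (Real.sqrt ρ * Real.sin θ / (1 - Real.sqrt ρ * Real.cos θ)))

/-- Powers of the sub-stochastic tridiagonal matrix `A` of the absorbed M/M/1-PS chain. -/
noncomputable def ker (ρ : ℝ) : ℕ → ℕ → ℕ → ℝ
  | 0, n, m => if n = m then 1 else 0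
  | (k+1), 0, m => (ρ / (1 + ρ)) * ker ρ k 1 m
  | (k+1), (n+1), m => (ρ / (1 + ρ)) * ker ρ k (n+2) m +
      (((n:ℝ) + 1) / (((n:ℝ) + 2) * (1 + ρ))) * ker ρ k n m

set_option maxHeartbeats 1000000

lemma polRec (n : ℕ) (x : ℝ) :
    pol (n+2) x = 2*x*pol (n+1) x - (((n:ℝ)+1)/((n:ℝ)+2))*pol n x := by
  have h : ((n:ℝ)+2) ≠ 0 := by positivity
  show (2 * ((n:ℝ) + 2) * x * pol (n+1) x - ((n:ℝ) + 1) * pol n x) / ((n:ℝ) + 2) = _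
  field_simp

/-- One step estimate for the Lyapunov function. -/
lemma stepAux {x a b t ε : ℝ} (hε : ε = 1 - x^2) (hε0 : 0 < ε)
    (hxl : -1 ≤ x) (hxu : x ≤ 1) (ht0 : 0 ≤ t) (ht1 : t ≤ 1) :
    ((2*x*a - t*b) - x*a)^2 + ε*a^2 ≤
      ((a - x*b)^2 + ε*b^2) * (1 + (5/ε) * (1-t)) := by
  set N : ℝ := (a - x*b)^2 + ε*b^2 with hN
  have hNnn : 0 ≤ N := by positivity
  have hb2 : ε * b^2 ≤ N := by nlinarith [sq_nonneg (a - x*b)]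
  have ha2 : ε * a^2 ≤ 4 * N := by
    have h1 : a^2 ≤ 2*(a - x*b)^2 + 2*x^2*b^2 := by nlinarith [sq_nonneg (a - 2*x*b)]
    nlinarith [sq_nonneg (a - x*b), sq_nonneg b, mul_nonneg hε0.le (sq_nonneg (a - x*b))]
  have hLHS : ((2*x*a - t*b) - x*a)^2 + ε*a^2 = a^2 - 2*x*t*(a*b) + t^2*b^2 := by
    rw [hε]; ring
  have hNeq : N = a^2 - 2*x*(a*b) + b^2 := by rw [hN, hε]; ring
  have key : 2*x*(a*b) ≤ a^2 + b^2 := by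
    nlinarith [mul_nonneg (by linarith : (0:ℝ) ≤ 1 - x) (sq_nonneg (a+b)),
      mul_nonneg (by linarith : (0:ℝ) ≤ 1 + x) (sq_nonneg (a-b))]
  have ht2 : t^2 ≤ 1 := by nlinarith
  have e1 : (t^2 - 1) * b^2 ≤ 0 := by nlinarith [sq_nonneg b]
  have e2 : 2*x*(1-t)*(a*b) ≤ (1-t)*(a^2+b^2) := by
    have h1t' : 0 ≤ 1 - t := by linarith
    calc 2*x*(1-t)*(a*b) = (1-t) * (2*x*(a*b)) := by ring
    _ ≤ (1-t) * (a^2+b^2) := mul_le_mul_of_nonneg_left key h1t'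
  have hdiff : (a^2 - 2*x*t*(a*b) + t^2*b^2) - N ≤ (1-t) * (a^2 + b^2) := by
    rw [hNeq]; nlinarith
  have h5 : a^2+b^2 ≤ (5/ε) * N := by
    rw [div_mul_eq_mul_div, le_div_iff₀ hε0]; nlinarith
  have hfin : (1-t) * (a^2+b^2) ≤ N * ((5/ε) * (1-t)) := by
    have h1t' : 0 ≤ 1 - t := by linarith
    calc (1-t) * (a^2+b^2) ≤ (1-t) * ((5/ε)*N) := mul_le_mul_of_nonneg_left h5 h1t'
    _ = N * ((5/ε) * (1-t)) := by ring
  rw [hLHS]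
  nlinarith [hfin, hdiff]

/-- Polynomial growth bound for `pol n x` when `x^2 < 1`. -/
lemma pol_bound {x : ℝ} (hx : x^2 < 1) :
    ∃ (m : ℕ) (B : ℝ), 0 ≤ B ∧ ∀ n : ℕ, |pol n x| ≤ B * ((n:ℝ)+1)^m := by
  have hε0 : 0 < 1 - x^2 := sub_pos.mpr hx
  set ε : ℝ := 1 - x^2 with hε
  have hxl : -1 ≤ x := by nlinarith
  have hxu : x ≤ 1 := by nlinarith
  set N : ℕ → ℝ := fun n => (pol (n+1) x - x * pol n x)^2 + ε * (pol n x)^2 with hN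
  have hNnn : ∀ n, 0 ≤ N n := fun n => by positivity
  set m : ℕ := ⌈(5:ℝ)/ε⌉₊ with hm
  have hCm : (5:ℝ)/ε ≤ (m:ℝ) := Nat.le_ceil _
  have hstep : ∀ n : ℕ, N (n+1) ≤ N n * (1 + ((5:ℝ)/ε) * (1 - ((n:ℝ)+1)/((n:ℝ)+2))) := by
    intro n
    have hn2 : (0:ℝ) < (n:ℝ)+2 := by positivity
    have ht0 : 0 ≤ ((n:ℝ)+1)/((n:ℝ)+2) := by positivity
    have ht1 : ((n:ℝ)+1)/((n:ℝ)+2) ≤ 1 := by rw [div_le_one hn2]; linarith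
    have hc : pol (n+2) x = 2*x*pol (n+1) x - (((n:ℝ)+1)/((n:ℝ)+2))*pol n x := polRec n x
    have := stepAux (a := pol (n+1) x) (b := pol n x) hε hε0 hxl hxu ht0 ht1
    calc N (n+1) = ((2*x*pol (n+1) x - (((n:ℝ)+1)/((n:ℝ)+2))*pol n x) - x*pol (n+1) x)^2
          + ε * (pol (n+1) x)^2 := by rw [hN]; simp only []; rw [hc]
    _ ≤ ((pol (n+1) x - x*pol n x)^2 + ε*(pol n x)^2) *
          (1 + ((5:ℝ)/ε) * (1 - ((n:ℝ)+1)/((n:ℝ)+2))) := this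
    _ = N n * (1 + ((5:ℝ)/ε) * (1 - ((n:ℝ)+1)/((n:ℝ)+2))) := by rw [hN]
  have hind : ∀ n : ℕ, N n ≤ N 0 * ((n:ℝ)+1)^m := by
    intro n
    induction n with
    | zero => simp
    | succ k ih =>
      have hk1 : (0:ℝ) < (k:ℝ)+1 := by positivity
      have hk2 : (0:ℝ) < (k:ℝ)+2 := by positivity
      have h1t : 1 - ((k:ℝ)+1)/((k:ℝ)+2) = 1/((k:ℝ)+2) := by field_simp; norm_num
      have hfac : 1 + ((5:ℝ)/ε) * (1 - ((k:ℝ)+1)/((k:ℝ)+2)) ≤ (1 + 1/((k:ℝ)+1))^m := by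
        rw [h1t]
        have h1 : ((5:ℝ)/ε) * (1/((k:ℝ)+2)) ≤ (m:ℝ) * (1/((k:ℝ)+1)) := by
          apply mul_le_mul hCm _ (by positivity) (by positivity)
          apply div_le_div_of_nonneg_left (by norm_num) hk1 (by linarith)
        have hge : (-2:ℝ) ≤ 1/((k:ℝ)+1) := le_trans (by norm_num : (-2:ℝ) ≤ 0) (by positivity)
        have h2 : 1 + (m:ℝ) * (1/((k:ℝ)+1)) ≤ (1 + 1/((k:ℝ)+1))^m :=
          one_add_mul_le_pow hge m
        linarith
      have hfac0 : 0 ≤ 1 + ((5:ℝ)/ε) * (1 - ((k:ℝ)+1)/((k:ℝ)+2)) := by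
        rw [h1t]; positivity
      calc N (k+1) ≤ N k * (1 + ((5:ℝ)/ε) * (1 - ((k:ℝ)+1)/((k:ℝ)+2))) := hstep k
      _ ≤ (N 0 * ((k:ℝ)+1)^m) * (1 + ((5:ℝ)/ε) * (1 - ((k:ℝ)+1)/((k:ℝ)+2))) :=
          mul_le_mul_of_nonneg_right ih hfac0
      _ ≤ (N 0 * ((k:ℝ)+1)^m) * (1 + 1/((k:ℝ)+1))^m := by
          apply mul_le_mul_of_nonneg_left hfac
          exact mul_nonneg (hNnn 0) (by positivity)
      _ = N 0 * (((k:ℝ)+1) * (1 + 1/((k:ℝ)+1)))^m := by rw [mul_pow]; ring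
      _ = N 0 * (((k:ℝ)+1)+1)^m := by
          congr 2
          field_simp
      _ = N 0 * ((((k:ℕ)+1:ℕ):ℝ)+1)^m := by push_cast; ring
  -- now extract the bound on |pol n x|
  refine ⟨m, Real.sqrt (N 0 / ε), Real.sqrt_nonneg _, fun n => ?_⟩
  have h1 : ε * (pol n x)^2 ≤ N n := by
    have : 0 ≤ (pol (n+1) x - x * pol n x)^2 := sq_nonneg _
    rw [hN]; simp only []; linarith
  have h2 : (pol n x)^2 ≤ (N 0 / ε) * ((n:ℝ)+1)^m := by
    rw [div_mul_eq_mul_div, le_div_iff₀ hε0]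
    calc (pol n x)^2 * ε = ε * (pol n x)^2 := by ring
    _ ≤ N n := h1
    _ ≤ N 0 * ((n:ℝ)+1)^m := hind n
  have hpow1 : (1:ℝ) ≤ ((n:ℝ)+1)^m := one_le_pow₀ (by linarith [Nat.cast_nonneg (α := ℝ) n])
  have h3 : (pol n x)^2 ≤ (Real.sqrt (N 0 / ε) * ((n:ℝ)+1)^m)^2 := by
    have hq : 0 ≤ N 0 / ε := div_nonneg (hNnn 0) hε0.le
    rw [mul_pow, Real.sq_sqrt hq]
    calc (pol n x)^2 ≤ (N 0 / ε) * ((n:ℝ)+1)^m := h2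
    _ ≤ (N 0 / ε) * (((n:ℝ)+1)^m)^2 := by
        apply mul_le_mul_of_nonneg_left _ hq
        calc ((n:ℝ)+1)^m = ((n:ℝ)+1)^m * 1 := (mul_one _).symm
        _ ≤ ((n:ℝ)+1)^m * ((n:ℝ)+1)^m := by
            apply mul_le_mul_of_nonneg_left hpow1 (by positivity)
        _ = (((n:ℝ)+1)^m)^2 := (sq _).symm
  calc |pol n x| = Real.sqrt ((pol n x)^2) := (Real.sqrt_sq_eq_abs _).symm
  _ ≤ Real.sqrt ((Real.sqrt (N 0 / ε) * ((n:ℝ)+1)^m)^2) := Real.sqrt_le_sqrt h3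
  _ = |Real.sqrt (N 0 / ε) * ((n:ℝ)+1)^m| := Real.sqrt_sq_eq_abs _
  _ = Real.sqrt (N 0 / ε) * ((n:ℝ)+1)^m := abs_of_nonneg (by positivity)

lemma summableAux (k : ℕ) {r : ℝ} (h0 : 0 < r) (h1 : r < 1) :
    Summable (fun n : ℕ => ((n:ℝ)+1)^k * r^n) := by
  have hr : ‖r‖ < 1 := by rwa [Real.norm_eq_abs, abs_of_pos h0]
  have h := summable_pow_mul_geometric_of_norm_lt_one (R := ℝ) k hr
  have h2 := (summable_nat_add_iff 1).mpr h
  have h3 := h2.mul_left r⁻¹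
  refine h3.congr fun n => ?_
  push_cast
  rw [pow_succ]
  field_simp

lemma odeAux {x y F D : ℝ} (hF : HasSum (fun n : ℕ => pol n x * y^n) F)
    (hD : HasSum (fun n : ℕ => pol n x * ((n:ℝ) * y^(n-1))) D) :
    (1 - 2*x*y + y^2) * D = (2*x - y) * F := by
  have h1 : HasSum (fun n : ℕ => pol (n+1) x * (((n:ℝ)+1) * y^n)) D := by
    have h := (hasSum_nat_add_iff' (f := fun n : ℕ => pol n x * ((n:ℝ) * y^(n-1))) 1).mpr hD
    simp only [Finset.range_one, Finset.sum_singleton, Nat.cast_zero, zero_mul, mul_zero,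
      sub_zero] at h
    have e : (fun n : ℕ => (fun k : ℕ => pol k x * ((k:ℝ) * y^(k-1))) (n+1))
        = fun n : ℕ => pol (n+1) x * (((n:ℝ)+1) * y^n) := by
      funext n
      simp only [Nat.add_sub_cancel]
      push_cast
      ring
    rwa [e] at h
  have h2 : HasSum (fun n : ℕ => ((n:ℝ)+1) * pol n x * y^n) (y*D + F) := by
    have h2a : HasSum (fun n : ℕ => (n:ℝ) * pol n x * y^n) (y*D) := by
      have h' := hD.mul_left y
      have e : (fun n : ℕ => y * (pol n x * ((n:ℝ) * y^(n-1))))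
          = fun n : ℕ => (n:ℝ) * pol n x * y^n := by
        funext n
        cases n with
        | zero => simp
        | succ k =>
          simp only [Nat.add_sub_cancel]
          push_cast
          rw [pow_succ]
          ring
      rwa [e] at h'
    have h' := h2a.add hF
    have e : (fun n : ℕ => (n:ℝ) * pol n x * y^n + pol n x * y^n)
        = fun n : ℕ => ((n:ℝ)+1) * pol n x * y^n := by
      funext n; ring
    rwa [e] at h'
  have h3 : HasSum (fun n : ℕ => (n:ℝ) * pol (n-1) x * y^n) (y*(y*D+F)) := by
    have h3b : HasSum (fun n : ℕ => (((n:ℝ)+1) * pol n x * y^(n+1))) (y*(y*D+F)) := by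
      have h' := h2.mul_left y
      have e : (fun n : ℕ => y * (((n:ℝ)+1) * pol n x * y^n))
          = fun n : ℕ => (((n:ℝ)+1) * pol n x * y^(n+1)) := by
        funext n; rw [pow_succ]; ring
      rwa [e] at h'
    have h3c : HasSum (fun n : ℕ => (fun k : ℕ => (k:ℝ) * pol (k-1) x * y^k) (n+1)) (y*(y*D+F)) := by
      have e : (fun n : ℕ => (fun k : ℕ => (k:ℝ) * pol (k-1) x * y^k) (n+1))
          = fun n : ℕ => (((n:ℝ)+1) * pol n x * y^(n+1)) := by
        funext n
        simp only [Nat.add_sub_cancel]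
        push_cast
        ring
      rwa [e]
    have h := (hasSum_nat_add_iff (f := fun n : ℕ => (n:ℝ) * pol (n-1) x * y^n) 1).mp h3c
    simpa using h
  have hrec : ∀ n : ℕ, pol (n+1) x * (((n:ℝ)+1) * y^n)
      = 2*x*(((n:ℝ)+1) * pol n x * y^n) - (n:ℝ)*pol (n-1) x*y^n := by
    intro n
    cases n with
    | zero => simp [pol]
    | succ k =>
      have hk : ((k:ℝ)+2) ≠ 0 := by positivity
      simp only [Nat.add_sub_cancel]
      rw [show k+1+1 = k+2 from rfl, polRec k x]
      push_cast
      field_simp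
      ring
  have hL : HasSum (fun n : ℕ => 2*x*(((n:ℝ)+1) * pol n x * y^n) - (n:ℝ)*pol (n-1) x*y^n) D := by
    rw [← funext hrec]
    exact h1
  have hR : HasSum (fun n : ℕ => 2*x*(((n:ℝ)+1) * pol n x * y^n) - (n:ℝ)*pol (n-1) x*y^n)
      (2*x*(y*D+F) - y*(y*D+F)) := (h2.mul_left (2*x)).sub h3
  have hEq : D = 2*x*(y*D+F) - y*(y*D+F) := hL.unique hR
  linear_combination hEq

noncomputable def GG (x σ : ℝ) : ℝ → ℝ := fun y =>
  (1 - 2*y*x + y^2) ^ (-(1:ℝ)/2) * Real.exp ((x/σ) * Real.arctan (y*σ/(1-y*x)))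

lemma GG_pos {x : ℝ} (σ : ℝ) (hx : x^2 < 1) (y : ℝ) : 0 < GG x σ y := by
  have hq : 0 < 1 - 2*y*x + y^2 := by nlinarith [sq_nonneg (y - x)]
  exact mul_pos (Real.rpow_pos_of_pos hq _) (Real.exp_pos _)

lemma GG_deriv {x σ : ℝ} (hσ : 0 < σ) (hsq : x^2 = 1 - σ^2) {y : ℝ} (hy : |y| < 1) :
    HasDerivAt (GG x σ) ((2*x - y)/(1 - 2*y*x + y^2) * GG x σ y) y := by
  have hx2 : x^2 < 1 := by nlinarith
  have hy2 : y^2 < 1 := by nlinarith [abs_lt.mp hy |>.1, abs_lt.mp hy |>.2]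
  have hq : 0 < 1 - 2*y*x + y^2 := by nlinarith [sq_nonneg (y - x)]
  have hden : 0 < 1 - y*x := by nlinarith [sq_nonneg (y - x), sq_nonneg (y + x)]
  -- derivative of the quadratic
  have hA : HasDerivAt (fun w : ℝ => 1 - 2*w*x + w^2) (2*y - 2*x) y := by
    have h1 : HasDerivAt (fun w : ℝ => 2*w*x) (2*x) y := by
      simpa using ((hasDerivAt_id y).const_mul 2).mul_const x
    have h := (h1.const_sub 1).add (hasDerivAt_pow 2 y)
    refine h.congr_deriv ?_
    push_cast
    ring
  have hrp : HasDerivAt (fun w : ℝ => (1 - 2*w*x + w^2) ^ (-(1:ℝ)/2))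
      ((2*y - 2*x) * (-(1:ℝ)/2) * (1 - 2*y*x + y^2) ^ (-(1:ℝ)/2 - 1)) y :=
    hA.rpow_const (Or.inl hq.ne')
  -- derivative of the arctan part
  have hnum : HasDerivAt (fun w : ℝ => w*σ) σ y := by
    simpa using (hasDerivAt_id y).mul_const σ
  have hden' : HasDerivAt (fun w : ℝ => 1 - w*x) (-x) y := by
    simpa using ((hasDerivAt_id y).mul_const x).const_sub 1
  have hv : HasDerivAt (fun w : ℝ => w*σ/(1-w*x))
      ((σ * (1-y*x) - y*σ*(-x))/(1-y*x)^2) y := hnum.div hden' hden.ne'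
  have harc : HasDerivAt (fun w : ℝ => Real.arctan (w*σ/(1-w*x)))
      (1 / (1 + (y*σ/(1-y*x))^2) * ((σ * (1-y*x) - y*σ*(-x))/(1-y*x)^2)) y := hv.arctan
  have hexp : HasDerivAt (fun w : ℝ => Real.exp ((x/σ) * Real.arctan (w*σ/(1-w*x))))
      (Real.exp ((x/σ) * Real.arctan (y*σ/(1-y*x))) *
        ((x/σ) * (1 / (1 + (y*σ/(1-y*x))^2) * ((σ * (1-y*x) - y*σ*(-x))/(1-y*x)^2)))) y :=
    (harc.const_mul (x/σ)).exp
  have htot := hrp.mul hexp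
  have h1v : 1 + (y*σ/(1-y*x))^2 = (1 - 2*y*x + y^2)/(1-y*x)^2 := by
    field_simp
    linear_combination (y^2) * hsq
  have hpow : (1 - 2*y*x + y^2) ^ (-(1:ℝ)/2 - 1)
      = (1 - 2*y*x + y^2) ^ (-(1:ℝ)/2) / (1 - 2*y*x + y^2) :=
    Real.rpow_sub_one hq.ne' _
  refine htot.congr_deriv ?_
  rw [h1v, hpow, GG]
  field_simp
  ring

theorem stmt2 (θ : ℝ) (hθ : θ ∈ Set.Ioo 0 Real.pi) (z : ℝ) (hz : |z| < 1) :
    HasSum (fun n : ℕ => pol n (Real.cos θ) * z ^ n)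
      ((1 - 2 * z * Real.cos θ + z ^ 2) ^ (-(1:ℝ)/2) *
        Real.exp ((Real.cos θ / Real.sin θ) *
          Real.arctan (z * Real.sin θ / (1 - z * Real.cos θ)))) := by
  obtain ⟨hθ0, hθπ⟩ := hθ
  set x := Real.cos θ with hxdef
  set σ := Real.sin θ with hσdef
  have hσ : 0 < σ := Real.sin_pos_of_pos_of_lt_pi hθ0 hθπ
  have hsq : x^2 = 1 - σ^2 := by
    have := Real.sin_sq_add_cos_sq θ; rw [← hxdef, ← hσdef] at this; linarith
  have hx2 : x^2 < 1 := by nlinarith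
  obtain ⟨m, B, hB, hbound⟩ := pol_bound hx2
  set r : ℝ := (1 + |z|)/2 with hr
  have hr0 : 0 < r := by positivity
  have hzr : |z| < r := by rw [hr]; linarith
  have hr1 : r < 1 := by rw [hr]; linarith
  set t : Set ℝ := Metric.ball (0:ℝ) r with ht
  have hmem : ∀ w : ℝ, w ∈ t → |w| < r := by
    intro w hw
    rw [ht, Metric.mem_ball, Real.dist_eq, sub_zero] at hw
    exact hw
  have hmem' : ∀ w : ℝ, |w| < r → w ∈ t := by
    intro w hw
    rw [ht, Metric.mem_ball, Real.dist_eq, sub_zero]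
    exact hw
  set u : ℕ → ℝ := fun n => (B/r) * (((n:ℝ)+1)^(m+1) * r^n) with hu
  have hus : Summable u := (summableAux (m+1) hr0 hr1).mul_left _
  set g : ℕ → ℝ → ℝ := fun n w => pol n x * w^n with hg
  set g' : ℕ → ℝ → ℝ := fun n w => pol n x * ((n:ℝ) * w^(n-1)) with hg'
  have hgderiv : ∀ (n : ℕ) (w : ℝ), w ∈ t → HasDerivAt (g n) (g' n w) w :=
    fun n w _ => (hasDerivAt_pow n w).const_mul (pol n x)
  have hbound' : ∀ (n : ℕ) (w : ℝ), w ∈ t → ‖g' n w‖ ≤ u n := by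
    intro n w hw
    have hwr : |w| < r := hmem w hw
    have hwa : 0 ≤ |w| := abs_nonneg w
    cases n with
    | zero => simp [hg', hu]; positivity
    | succ k =>
      have h1 : ‖g' (k+1) w‖ = |pol (k+1) x| * (((k:ℝ)+1) * |w|^k) := by
        rw [hg']
        simp only [Real.norm_eq_abs, abs_mul, Nat.add_sub_cancel, abs_pow]
        push_cast
        rw [abs_of_nonneg (by positivity : (0:ℝ) ≤ (k:ℝ)+1)]
      rw [h1]
      have e1 : |pol (k+1) x| ≤ B * ((k:ℝ)+2)^m := by
        have h := hbound (k+1)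
        push_cast at h
        have e : (k:ℝ)+1+1 = (k:ℝ)+2 := by ring
        rwa [e] at h
      have e2 : ((k:ℝ)+1) * |w|^k ≤ ((k:ℝ)+2) * r^k := by
        apply mul_le_mul (by linarith) (pow_le_pow_left₀ hwa hwr.le k) (by positivity)
          (by positivity)
      have e3 : u (k+1) = B * (((k:ℝ)+2)^(m+1) * r^k) := by
        rw [hu]
        push_cast
        rw [pow_succ r k]
        field_simp
        ring
      rw [e3]
      calc |pol (k+1) x| * (((k:ℝ)+1) * |w|^k)
          ≤ (B * ((k:ℝ)+2)^m) * (((k:ℝ)+2) * r^k) := by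
            apply mul_le_mul e1 e2 (by positivity) (by positivity)
      _ = B * (((k:ℝ)+2)^(m+1) * r^k) := by rw [pow_succ]; ring
  have hg0 : Summable (fun n => g n 0) := by
    apply summable_of_ne_finset_zero (s := ({0} : Finset ℕ))
    intro n hn
    have hn0 : n ≠ 0 := by simpa using hn
    simp [hg, zero_pow hn0]
  have h0t : (0:ℝ) ∈ t := hmem' 0 (by simpa using hr0)
  set FF : ℝ → ℝ := fun w => ∑' n, g n w with hFF
  have hgsummable : ∀ y : ℝ, y ∈ t → Summable (fun n => g n y) := by
    intro y hy
    apply Summable.of_norm_bounded (g := fun n : ℕ => B * (((n:ℝ)+1)^m * r^n))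
      ((summableAux m hr0 hr1).mul_left B)
    intro n
    rw [hg]
    simp only [Real.norm_eq_abs, abs_mul, abs_pow]
    calc |pol n x| * |y|^n ≤ (B * ((n:ℝ)+1)^m) * r^n := by
          apply mul_le_mul (hbound n) (pow_le_pow_left₀ (abs_nonneg y) (hmem y hy).le n)
            (by positivity) (by positivity)
    _ = B * (((n:ℝ)+1)^m * r^n) := by ring
  have hg'summable : ∀ y : ℝ, y ∈ t → Summable (fun n => g' n y) := by
    intro y hy
    exact Summable.of_norm_bounded hus (fun n => hbound' n y hy)
  have hFderiv : ∀ y : ℝ, y ∈ t → HasDerivAt FF (∑' n, g' n y) y := by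
    intro y hy
    exact hasDerivAt_tsum_of_isPreconnected hus Metric.isOpen_ball
      ((convex_ball (0:ℝ) r).isPreconnected) hgderiv hbound' h0t hg0 hy
  have hGpos : ∀ y : ℝ, 0 < GG x σ y := GG_pos σ hx2
  have hODE : ∀ y : ℝ, y ∈ t → HasDerivAt (fun w => FF w / GG x σ w) 0 y := by
    intro y hy
    have hy1 : |y| < 1 := (hmem y hy).trans hr1
    have hq : 0 < 1 - 2*x*y + y^2 := by nlinarith [sq_nonneg (y - x)]
    have hFsumy : HasSum (fun n => g n y) (FF y) := (hgsummable y hy).hasSum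
    have hDsumy : HasSum (fun n => g' n y) (∑' n, g' n y) := (hg'summable y hy).hasSum
    have hode : (1 - 2*x*y + y^2) * (∑' n, g' n y) = (2*x - y) * FF y :=
      odeAux hFsumy hDsumy
    have hG := GG_deriv hσ hsq hy1
    have h := (hFderiv y hy).div hG (hGpos y).ne'
    have hnum : (∑' n, g' n y) * GG x σ y
        - FF y * ((2*x - y)/(1 - 2*y*x + y^2) * GG x σ y) = 0 := by
      have hq' : (1 - 2*y*x + y^2) ≠ 0 := by nlinarith [sq_nonneg (y - x)]
      field_simp
      linear_combination (GG x σ y) * hode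
    rw [hnum, zero_div] at h
    exact h
  -- compute values at 0
  have hF0 : FF 0 = 1 := by
    have h1 : HasSum (fun n => g n 0) (g 0 0) := by
      apply hasSum_single 0
      intro b hb
      simp [hg, zero_pow hb]
    have h2 : g 0 0 = 1 := by simp [hg, pol]
    rw [hFF]
    simp only []
    rw [h1.tsum_eq, h2]
  have hG0 : GG x σ 0 = 1 := by
    rw [GG]
    norm_num
  -- MVT to conclude FF = GG on the relevant segment
  have hzt : z ∈ t := hmem' z hzr
  have hkey : FF z = GG x σ z := by
    rcases lt_trichotomy z 0 with hlt | heq | hgt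
    · obtain ⟨ξ, hξ, h0⟩ := exists_hasDerivAt_eq_slope (fun w => FF w / GG x σ w)
        (fun _ => 0) hlt
        (fun y hy => by
          have hyt : y ∈ t := hmem' y (by
            rw [Set.mem_Icc] at hy
            rw [abs_lt]
            constructor
            · have := abs_lt.mp hzr; linarith [hy.1, this.1]
            · linarith [hy.2, hr0])
          exact (hODE y hyt).continuousAt.continuousWithinAt)
        (fun y hy => by
          apply hODE y
          apply hmem'
          rw [Set.mem_Ioo] at hy
          rw [abs_lt]
          have := abs_lt.mp hzr
          constructor <;> [linarith [hy.1, this.1]; linarith [hy.2, hr0]])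
      have heq2 : FF z / GG x σ z = FF 0 / GG x σ 0 := by
        have hz0 : (0:ℝ) - z ≠ 0 := by linarith
        have h := h0.symm
        rw [div_eq_zero_iff] at h
        rcases h with h | h
        · linarith
        · exact absurd h hz0
      rw [hF0, hG0, div_one] at heq2
      rwa [div_eq_one_iff_eq (hGpos z).ne'] at heq2
    · rw [heq, hF0, hG0]
    · obtain ⟨ξ, hξ, h0⟩ := exists_hasDerivAt_eq_slope (fun w => FF w / GG x σ w)
        (fun _ => 0) hgt
        (fun y hy => by
          have hyt : y ∈ t := hmem' y (by
            rw [Set.mem_Icc] at hy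
            rw [abs_lt]
            constructor
            · linarith [hy.1, hr0]
            · have := abs_lt.mp hzr; linarith [hy.2, this.2])
          exact (hODE y hyt).continuousAt.continuousWithinAt)
        (fun y hy => by
          apply hODE y
          apply hmem'
          rw [Set.mem_Ioo] at hy
          rw [abs_lt]
          have := abs_lt.mp hzr
          constructor <;> [linarith [hy.1, hr0]; linarith [hy.2, this.2]])
      have heq2 : FF z / GG x σ z = FF 0 / GG x σ 0 := by
        have hz0 : z - 0 ≠ 0 := by linarith
        have h := h0.symm
        rw [div_eq_zero_iff] at h
        rcases h with h | h
        · linarith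
        · exact absurd h hz0
      rw [hF0, hG0, div_one] at heq2
      rwa [div_eq_one_iff_eq (hGpos z).ne'] at heq2
  have hfinal : HasSum (fun n => g n z) (GG x σ z) := hkey ▸ (hgsummable z hzt).hasSum
  exact hfinal
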